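/- For every s ∈ [0,1/2] there exist a positive semidefinite matrix R on ℂ³⊗ℂ³ and a density matrix ρ on ℂ³ such that ρ⊗I₃ − T_b(R) and ρ⊗I₃ + T_b(R) are positive semidefinite and Tr(R·J^s) = 1 + √(1−s). (This exhibits a feasible point of the Wang–Fang–Duan semidefinite program showing Γ(N_s) ≥ 1 + √(1−s); one may take ρ = ½(|0⟩⟨0| + |2⟩⟨2|) and R = ½(|00⟩⟨00| + |01⟩⟨01| + |01⟩⟨22| + |22⟩⟨01| + |22⟩⟨22|).) -/

import Mathlib

open Matrix Kronecker ComplexOrder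

/-- Partial transpose on the second tensor factor. -/
noncomputable def ptransposeB {m n : ℕ}
    (M : Matrix (Fin m × Fin n) (Fin m × Fin n) ℂ) :
    Matrix (Fin m × Fin n) (Fin m × Fin n) ℂ :=
  Matrix.of fun p q => M (p.1, q.2) (q.1, p.2)

/-- |ψ₁⟩ = √s |0⟩⊗|0⟩ + |1⟩⊗|2⟩. -/
noncomputable def psi1 (s : ℝ) : Fin 3 × Fin 3 → ℂ := fun p =>
  if p = (0, 0) then (Real.sqrt s : ℂ) else if p = (1, 2) then 1 else 0

/-- |ψ₂⟩ = √(1−s) |0⟩⊗|1⟩ + |2⟩⊗|2⟩. -/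
noncomputable def psi2 (s : ℝ) : Fin 3 × Fin 3 → ℂ := fun p =>
  if p = (0, 1) then (Real.sqrt (1 - s) : ℂ) else if p = (2, 2) then 1 else 0

/-- The unnormalized Choi operator J^s = |ψ₁⟩⟨ψ₁| + |ψ₂⟩⟨ψ₂| of the channel N_s. -/
noncomputable def choiNs (s : ℝ) : Matrix (Fin 3 × Fin 3) (Fin 3 × Fin 3) ℂ :=
  Matrix.vecMulVec (psi1 s) (star (psi1 s)) + Matrix.vecMulVec (psi2 s) (star (psi2 s))

lemma outer_psd {n : Type*} [Fintype n] (v : n → ℂ) :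
    (Matrix.vecMulVec v (star v)).PosSemidef := by
  have h := Matrix.posSemidef_self_mul_conjTranspose (Matrix.replicateCol Unit v)
  rw [Matrix.conjTranspose_replicateCol] at h
  rwa [Matrix.vecMulVec_eq Unit]

lemma psd_smul {n : Type*} [Fintype n] {M : Matrix n n ℂ} (h : M.PosSemidef)
    {c : ℝ} (hc : 0 ≤ c) : ((c : ℂ) • M).PosSemidef := by
  constructor
  · show _ = _
    rw [Matrix.conjTranspose_smul, h.1.eq]
    simp [Complex.star_def, Complex.conj_ofReal]
  · exact (h.smul (by exact_mod_cast hc)).2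

/-- e00 -/
def vU : Fin 3 × Fin 3 → ℂ := fun p => if p = (0, 0) then 1 else 0
/-- e01 + e22 -/
def vV : Fin 3 × Fin 3 → ℂ := fun p =>
  if p = (0, 1) then 1 else if p = (2, 2) then 1 else 0
/-- e02 - e21 -/
def vWm : Fin 3 × Fin 3 → ℂ := fun p =>
  if p = (0, 2) then 1 else if p = (2, 1) then -1 else 0
/-- e02 + e21 -/
def vWp : Fin 3 × Fin 3 → ℂ := fun p =>
  if p = (0, 2) then 1 else if p = (2, 1) then 1 else 0
/-- e20 -/
def vG : Fin 3 × Fin 3 → ℂ := fun p => if p = (2, 0) then 1 else 0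
def vE00 : Fin 3 × Fin 3 → ℂ := fun p => if p = (0, 0) then 1 else 0
def vE01 : Fin 3 × Fin 3 → ℂ := fun p => if p = (0, 1) then 1 else 0
def vE22 : Fin 3 × Fin 3 → ℂ := fun p => if p = (2, 2) then 1 else 0

/-- R = ½(|00⟩⟨00| + (|01⟩+|22⟩)(⟨01|+⟨22|)). -/
noncomputable def Rmat : Matrix (Fin 3 × Fin 3) (Fin 3 × Fin 3) ℂ :=
  (((1/2 : ℝ) : ℂ)) • (Matrix.vecMulVec vU (star vU) + Matrix.vecMulVec vV (star vV))

/-- ρ = ½(|0⟩⟨0| + |2⟩⟨2|). -/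
noncomputable def rhoMat : Matrix (Fin 3) (Fin 3) ℂ :=
  Matrix.diagonal ![1/2, 0, 1/2]

set_option maxHeartbeats 4000000 in
/-- Feasible point for the SDP of Wang–Fang–Duan: Γ(N_s) ≥ 1 + √(1−s). -/
theorem stmt0 (s : ℝ) (hs : s ∈ Set.Icc (0 : ℝ) (1/2)) :
    ∃ (R : Matrix (Fin 3 × Fin 3) (Fin 3 × Fin 3) ℂ) (ρ : Matrix (Fin 3) (Fin 3) ℂ),
      R.PosSemidef ∧ ρ.PosSemidef ∧ ρ.trace = 1 ∧
      (ρ ⊗ₖ (1 : Matrix (Fin 3) (Fin 3) ℂ) - ptransposeB R).PosSemidef ∧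
      (ρ ⊗ₖ (1 : Matrix (Fin 3) (Fin 3) ℂ) + ptransposeB R).PosSemidef ∧
      (R * choiNs s).trace = ((1 + Real.sqrt (1 - s) : ℝ) : ℂ) := by
  obtain ⟨hs0, hs2⟩ := hs
  have hs1 : s ≤ 1 := le_trans hs2 (by norm_num)
  refine ⟨Rmat, rhoMat, ?_, ?_, ?_, ?_, ?_, ?_⟩
  · exact psd_smul (((outer_psd vU).add (outer_psd vV))) (by norm_num)
  · refine Matrix.PosSemidef.diagonal ?_
    intro i
    fin_cases i <;> simp <;> rw [Complex.le_def] <;> norm_num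
  · rw [rhoMat, Matrix.trace_diagonal, Fin.sum_univ_three]
    norm_num [Matrix.cons_val_two]
  · have heq : rhoMat ⊗ₖ (1 : Matrix (Fin 3) (Fin 3) ℂ) - ptransposeB Rmat =
        (((1/2 : ℝ) : ℂ)) • (Matrix.vecMulVec vWm (star vWm) + Matrix.vecMulVec vG (star vG)) := by
      ext ⟨i, j⟩ ⟨k, l⟩
      fin_cases i <;> fin_cases j <;> fin_cases k <;> fin_cases l <;>
        simp [rhoMat, Rmat, ptransposeB, vU, vV, vWm, vG, Matrix.vecMulVec_apply,
          Matrix.one_apply, Matrix.diagonal, Prod.ext_iff]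
    rw [heq]
    exact psd_smul (((outer_psd vWm).add (outer_psd vG))) (by norm_num)
  · have heq : rhoMat ⊗ₖ (1 : Matrix (Fin 3) (Fin 3) ℂ) + ptransposeB Rmat =
        (((1/2 : ℝ) : ℂ)) • (Matrix.vecMulVec vWp (star vWp) + Matrix.vecMulVec vG (star vG))
          + Matrix.vecMulVec vE00 (star vE00) + Matrix.vecMulVec vE01 (star vE01)
          + Matrix.vecMulVec vE22 (star vE22) := by
      ext ⟨i, j⟩ ⟨k, l⟩
      fin_cases i <;> fin_cases j <;> fin_cases k <;> fin_cases l <;>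
        simp [rhoMat, Rmat, ptransposeB, vU, vV, vWp, vG, vE00, vE01, vE22,
          Matrix.vecMulVec_apply, Matrix.one_apply, Matrix.diagonal, Prod.ext_iff] <;> norm_num
    rw [heq]
    exact ((((psd_smul ((outer_psd vWp).add (outer_psd vG)) (by norm_num)).add
      (outer_psd vE00)).add (outer_psd vE01)).add (outer_psd vE22))
  · have h1 : (Real.sqrt s : ℂ) * (Real.sqrt s : ℂ) = (s : ℂ) := by
      rw [← Complex.ofReal_mul, Real.mul_self_sqrt hs0]
    have h2 : (Real.sqrt (1 - s) : ℂ) * (Real.sqrt (1 - s) : ℂ) = 1 - (s : ℂ) := by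
      rw [← Complex.ofReal_mul, Real.mul_self_sqrt (by linarith)]
      push_cast
      ring
    simp only [Matrix.trace, Matrix.diag, Matrix.mul_apply, choiNs, Rmat, psi1, psi2,
      vU, vV, Matrix.vecMulVec_apply, Matrix.add_apply, Matrix.smul_apply,
      Fintype.sum_prod_type, Fin.sum_univ_three]
    simp [vU, vV, psi1, psi2, Complex.star_def, Complex.conj_ofReal, Prod.ext_iff,
      Fin.ext_iff, -Prod.mk_zero_zero, -Prod.mk_one_one]
    linear_combination ((1:ℂ)/2) * h2 + ((1:ℂ)/2) * h1
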